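/- Let G be a 1-extendible graph which is bipartite after deletion of two edges e₁ and e₂ (i.e., G − {e₁, e₂} is bipartite) and such that G itself is not bipartite. Then G − {e₁} is not bipartite, G − {e₂} is not bipartite, and every even cycle of G containing e₁ also contains e₂ and vice versa; in particular, every alternating cycle (with respect to any perfect matching) containing one of e₁, e₂ contains both. -/

import Mathlib

open scoped Classical

variable {V : Type*}

/-- `m` is a perfect matching of `G`: a fixed-point-free involution matching each
vertex to an adjacent vertex. -/
def IsPerfMatching (G : SimpleGraph V) (m : Equiv.Perm V) : Prop :=
  (∀ v, m v ≠ v) ∧ (∀ v, m (m v) = v) ∧ ∀ v, G.Adj v (m v)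

/-- The set of edges of the perfect matching `m`. -/
def matchEdges (m : Equiv.Perm V) : Set (Sym2 V) := {e | ∃ v, e = s(v, m v)}

/-- `G` is 1-extendible: every edge lies in some perfect matching. -/
def OneExtendible (G : SimpleGraph V) : Prop :=
  ∀ ⦃u v : V⦄, G.Adj u v → ∃ m : Equiv.Perm V, IsPerfMatching G m ∧ m u = v

/-- `G` is bipartite. -/
def IsBipartite (G : SimpleGraph V) : Prop :=
  ∃ M : Set V, ∀ ⦃u v : V⦄, G.Adj u v → (u ∈ M ↔ v ∉ M)

/-- The reference orientation of the bipartite graph `K` with respect to the side `M`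
and the perfect matching `f`: matching edges are directed from `M` to its complement,
all other edges the other way. -/
def refOrient (K : SimpleGraph V) (M : Set V) (f : Equiv.Perm V) : V → V → Prop :=
  fun u v => K.Adj u v ∧ ((u ∈ M ∧ f u = v) ∨ (u ∉ M ∧ f u ≠ v))

/-- The walk `p` is directed with respect to the orientation `D`. -/
def DirWalk (D : V → V → Prop) {G : SimpleGraph V} {u v : V} (p : G.Walk u v) : Prop :=
  ∀ d ∈ p.darts, D d.toProd.1 d.toProd.2

/-- The path `p` is `f`-alternating: every internal vertex is incident with an edge of
`p ∩ f`. -/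
def AltPath (f : Equiv.Perm V) {G : SimpleGraph V} {u v : V} (p : G.Walk u v) : Prop :=
  ∀ w ∈ p.support, w ≠ u → w ≠ v → s(w, f w) ∈ p.edges

/-- The cycle `c` is `f`-alternating: its edges alternate between `f` and its
complement; equivalently, the matching edge of every vertex of `c` lies on `c`. -/
def AlternatingCycle (f : Equiv.Perm V) {G : SimpleGraph V} {v : V} (c : G.Walk v v) :
    Prop :=
  ∀ w ∈ c.support, s(w, f w) ∈ c.edges

/-- The walk `p` is clockwise even with respect to the orientation `O`: the number of
its darts agreeing with `O` is even. -/
def CWEven (O : V → V → Bool) {G : SimpleGraph V} {u v : V} (p : G.Walk u v) : Prop :=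
  Even (p.darts.countP fun d => O d.toProd.1 d.toProd.2)

/- ## Auxiliary lemmas -/

lemma countP_or_disj {α : Type*} (p q : α → Bool) : ∀ (l : List α),
    (∀ a ∈ l, ¬(p a = true ∧ q a = true)) →
    l.countP (fun a => p a || q a) = l.countP p + l.countP q := by
  intro l
  induction l with
  | nil => simp
  | cons a l ih =>
    intro h
    simp only [List.countP_cons, ih (fun x hx => h x (List.mem_cons_of_mem a hx))]
    have := h a List.mem_cons_self
    by_cases hp : p a = true <;> by_cases hq : q a = true <;> simp [hp, hq] at this ⊢ <;> omega

lemma countP_map_le_one {α β : Type*} (x : β) (F : α → β) (p : α → Bool) : ∀ (l : List α),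
    (l.map F).Nodup → (∀ a, p a = true → F a = x) → l.countP p ≤ 1 := by
  intro l
  induction l with
  | nil => simp
  | cons a l ih =>
    intro hn hp
    rw [List.map_cons, List.nodup_cons] at hn
    simp only [List.countP_cons]
    by_cases hpa : p a = true
    · have hz : l.countP p = 0 := by
        rw [List.countP_eq_zero]
        intro b hb hpb
        exact hn.1 (((hp b hpb).trans (hp a hpa).symm) ▸ List.mem_map_of_mem (f := F) hb)
      simp [hpa, hz]
    · simp [hpa, ih hn.2 hp]

lemma countP_congr' {α : Type*} (p q : α → Bool) : ∀ (l : List α),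
    (∀ a ∈ l, p a = q a) → l.countP p = l.countP q := by
  intro l
  induction l with
  | nil => simp
  | cons a l ih =>
    intro h
    simp only [List.countP_cons, ih (fun x hx => h x (List.mem_cons_of_mem a hx)),
      h a List.mem_cons_self]

lemma walk_cross_parity (M : Set V) {G : SimpleGraph V} : ∀ {u v : V} (p : G.Walk u v),
    Even (p.darts.countP fun d => decide (¬(d.toProd.1 ∈ M ↔ d.toProd.2 ∈ M))) ↔
      (u ∈ M ↔ v ∈ M) := by
  intro u v p
  induction p with
  | nil => simp
  | @cons u x v h p ih =>
    rw [SimpleGraph.Walk.darts_cons, List.countP_cons]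
    by_cases hc : (u ∈ M ↔ x ∈ M)
    · rw [if_neg (by simp [hc])]
      simp only [Nat.add_zero]
      rw [ih]; tauto
    · rw [if_pos (by simp [hc]), Nat.even_add_one, ih]; tauto

lemma count_aux [Fintype V] (S : Set V) (f g : Equiv.Perm V) (a b : V) (hab : a ≠ b)
    (hfa : f a = b) (hfb : f b = a) (ha : a ∈ S) (hb : b ∈ S)
    (hg : ∀ v, v ∈ S ↔ g v ∉ S)
    (hf : ∀ v, v ≠ a → v ≠ b → (v ∈ S ↔ f v ∉ S)) : False := by
  classical
  set T : Finset V := Finset.univ.filter (· ∈ S) with hT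
  set Tc : Finset V := Finset.univ.filter (· ∉ S) with hTc
  have hmemT : ∀ v, v ∈ T ↔ v ∈ S := by intro v; simp [hT]
  have hmemTc : ∀ v, v ∈ Tc ↔ v ∉ S := by intro v; simp [hTc]
  have h1 : T.card = Tc.card := by
    apply Finset.card_bij (fun v _ => g v)
    · intro v hv; rw [hmemTc]; exact (hg v).mp ((hmemT v).mp hv)
    · intro v₁ _ v₂ _ h; exact g.injective h
    · intro w hw
      refine ⟨g.symm w, ?_, g.apply_symm_apply w⟩
      rw [hmemT]
      exact (hg (g.symm w)).mpr (by rw [g.apply_symm_apply]; exact (hmemTc w).mp hw)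
  have h2 : Tc.card = ((T.erase a).erase b).card := by
    apply Finset.card_bij (fun v _ => f v)
    · intro v hv
      have hvS : v ∉ S := (hmemTc v).mp hv
      have hva : v ≠ a := fun h => hvS (h ▸ ha)
      have hvb : v ≠ b := fun h => hvS (h ▸ hb)
      have hfvS : f v ∈ S := by
        by_contra hns
        exact hvS ((hf v hva hvb).mpr hns)
      have hfva : f v ≠ a := fun h => hvS (by rw [← hfb] at h; exact (f.injective h) ▸ hb)
      have hfvb : f v ≠ b := fun h => hvS (by rw [← hfa] at h; exact (f.injective h) ▸ ha)
      exact Finset.mem_erase.mpr ⟨hfvb, Finset.mem_erase.mpr ⟨hfva, (hmemT _).mpr hfvS⟩⟩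
    · intro v₁ _ v₂ _ h; exact f.injective h
    · intro w hw
      rcases Finset.mem_erase.mp hw with ⟨hwb, hw'⟩
      rcases Finset.mem_erase.mp hw' with ⟨hwa, hwT⟩
      have hwS : w ∈ S := (hmemT w).mp hwT
      have h1' : f.symm w ≠ a := fun h => hwb (by rw [← hfa, ← h, Equiv.apply_symm_apply])
      have h2' : f.symm w ≠ b := fun h => hwa (by rw [← hfb, ← h, Equiv.apply_symm_apply])
      refine ⟨f.symm w, ?_, f.apply_symm_apply w⟩
      rw [hmemTc]
      intro hsS
      exact ((hf _ h1' h2').mp hsS) (by rw [f.apply_symm_apply]; exact hwS)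
  have h3 : ((T.erase a).erase b).card = T.card - 2 := by
    have hbT : b ∈ T.erase a := Finset.mem_erase.mpr ⟨hab.symm, (hmemT b).mpr hb⟩
    rw [Finset.card_erase_of_mem hbT, Finset.card_erase_of_mem ((hmemT a).mpr ha)]; omega
  have h4 : 2 ≤ T.card := by
    have : ({a, b} : Finset V) ⊆ T := by
      intro x hx
      rcases Finset.mem_insert.mp hx with h | h
      · exact (hmemT x).mpr (h ▸ ha)
      · exact (hmemT x).mpr ((Finset.mem_singleton.mp h) ▸ hb)
    calc 2 = ({a, b} : Finset V).card := (Finset.card_pair hab).symm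
    _ ≤ T.card := Finset.card_le_card this
  omega

lemma bip_two (G : SimpleGraph V) (a b c d : V) (hab : a ≠ b) (hcd : c ≠ d)
    (hne : s(a,b) ≠ s(c,d))
    (hsub : ∀ ⦃u v⦄, G.Adj u v → s(u,v) = s(a,b) ∨ s(u,v) = s(c,d)) : IsBipartite G := by
  by_cases hbc : b = c
  · have had : a ≠ d := by
      intro h
      exact hne (by rw [hbc, h, Sym2.eq_swap])
    refine ⟨{a, d}, ?_⟩
    intro u v h
    rcases hsub h with h' | h' <;> rw [Sym2.eq_iff] at h' <;>
      rcases h' with ⟨rfl, rfl⟩ | ⟨rfl, rfl⟩ <;> subst hbc <;>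
      simp [Set.mem_insert_iff, hab, hcd, had] <;> tauto
  · by_cases had : a = d
    · refine ⟨{a}, ?_⟩
      intro u v h
      have hca : c ≠ a := fun h => hcd (h.trans had)
      rcases hsub h with h' | h' <;> rw [Sym2.eq_iff] at h' <;>
        rcases h' with ⟨rfl, rfl⟩ | ⟨rfl, rfl⟩ <;> subst had <;>
        simp [hab, hcd] <;> tauto
    · refine ⟨{a, c}, ?_⟩
      intro u v h
      rcases hsub h with h' | h' <;> rw [Sym2.eq_iff] at h' <;>
        rcases h' with ⟨rfl, rfl⟩ | ⟨rfl, rfl⟩ <;>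
        simp [hab, hcd, hbc, had] <;> tauto

lemma not_bip_del_one [Fintype V] (G : SimpleGraph V) (h1e : OneExtendible G)
    (e₁ e₂ : Sym2 V) (he₁ : e₁ ∈ G.edgeSet)
    (hH1e : OneExtendible (G.deleteEdges {e₁, e₂}))
    (hHedge : ∃ u v, (G.deleteEdges {e₁, e₂}).Adj u v)
    (hnb : ¬ IsBipartite G) : ¬ IsBipartite (G.deleteEdges {e₁}) := by
  rintro ⟨M', hM'⟩
  obtain ⟨a, b, rfl⟩ : ∃ x y, e₁ = s(x, y) := by
    induction e₁ using Sym2.ind with | _ x y => exact ⟨x, y, rfl⟩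
  have hab : G.Adj a b := (SimpleGraph.mem_edgeSet G).mp he₁
  obtain ⟨f, hf, hfa⟩ := h1e hab
  have hfb : f b = a := by rw [← hfa, hf.2.1]
  obtain ⟨u₀, v₀, huv⟩ := hHedge
  obtain ⟨g, hg, -⟩ := hH1e huv
  have hgcross : ∀ v, v ∈ M' ↔ g v ∉ M' := by
    intro v
    have h := (SimpleGraph.deleteEdges_adj).mp (hg.2.2 v)
    refine hM' (SimpleGraph.deleteEdges_adj.mpr ⟨h.1, ?_⟩)
    intro hx
    simp only [Set.mem_singleton_iff] at hx
    exact h.2 (by simp [hx])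
  have hfcross : ∀ v, v ≠ a → v ≠ b → (v ∈ M' ↔ f v ∉ M') := by
    intro v hva hvb
    apply hM'
    rw [SimpleGraph.deleteEdges_adj]
    refine ⟨hf.2.2 v, ?_⟩
    intro hx
    simp only [Set.mem_singleton_iff, Sym2.eq_iff] at hx
    rcases hx with ⟨h1, _⟩ | ⟨h1, _⟩
    · exact hva h1
    · exact hvb h1
  have habM : (a ∈ M' ↔ b ∈ M') := by
    by_contra hcon
    apply hnb
    refine ⟨M', ?_⟩
    intro u v huvG
    by_cases hx : s(u, v) = s(a, b)
    · rw [Sym2.eq_iff] at hx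
      rcases hx with ⟨rfl, rfl⟩ | ⟨rfl, rfl⟩ <;> tauto
    · exact hM' (SimpleGraph.deleteEdges_adj.mpr ⟨huvG, by simpa using hx⟩)
  have habne : a ≠ b := G.ne_of_adj hab
  by_cases haM : a ∈ M'
  · exact count_aux M' f g a b habne hfa hfb haM (habM.mp haM) hgcross hfcross
  · refine count_aux M'ᶜ f g a b habne hfa hfb haM (fun h => haM (habM.mpr h)) ?_ ?_
    · intro v
      have := hgcross v
      simp only [Set.mem_compl_iff]
      tauto
    · intro v hva hvb
      have := hfcross v hva hvb
      simp only [Set.mem_compl_iff]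
      tauto

theorem stmt13 [Fintype V] (G : SimpleGraph V) (hconn : G.Connected)
    (h1e : OneExtendible G) (e₁ e₂ : Sym2 V)
    (he₁ : e₁ ∈ G.edgeSet) (he₂ : e₂ ∈ G.edgeSet) (hne : e₁ ≠ e₂)
    (hbip : IsBipartite (G.deleteEdges {e₁, e₂}))
    (hH1e : OneExtendible (G.deleteEdges {e₁, e₂}))
    (hnb : ¬ IsBipartite G) :
    ¬ IsBipartite (G.deleteEdges {e₁}) ∧ ¬ IsBipartite (G.deleteEdges {e₂}) ∧
    ∀ (v : V) (c : G.Walk v v), c.IsCycle → Even c.length →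
      (e₁ ∈ c.edges ↔ e₂ ∈ c.edges) := by
  obtain ⟨a, b, rfl⟩ : ∃ x y, e₁ = s(x, y) := by
    induction e₁ using Sym2.ind with | _ x y => exact ⟨x, y, rfl⟩
  obtain ⟨c, d, rfl⟩ : ∃ x y, e₂ = s(x, y) := by
    induction e₂ using Sym2.ind with | _ x y => exact ⟨x, y, rfl⟩
  have hab : G.Adj a b := (SimpleGraph.mem_edgeSet G).mp he₁
  have hcd : G.Adj c d := (SimpleGraph.mem_edgeSet G).mp he₂
  have habne : a ≠ b := G.ne_of_adj hab
  have hcdne : c ≠ d := G.ne_of_adj hcd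
  -- H has at least one edge
  have hHedge : ∃ u v, (G.deleteEdges {s(a, b), s(c, d)}).Adj u v := by
    by_contra hno
    push_neg at hno
    apply hnb
    apply bip_two G a b c d habne hcdne hne
    intro u v h
    by_contra hor
    push_neg at hor
    exact hno u v (SimpleGraph.deleteEdges_adj.mpr
      ⟨h, by simp only [Set.mem_insert_iff, Set.mem_singleton_iff]; tauto⟩)
  have hpair : ({s(c, d), s(a, b)} : Set (Sym2 V)) = {s(a, b), s(c, d)} :=
    Set.pair_comm _ _
  have hc1 : ¬ IsBipartite (G.deleteEdges {s(a, b)}) :=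
    not_bip_del_one G h1e _ _ he₁ hH1e hHedge hnb
  have hc2 : ¬ IsBipartite (G.deleteEdges {s(c, d)}) :=
    not_bip_del_one G h1e (s(c, d)) (s(a, b)) he₂ (by rw [hpair]; exact hH1e)
      (by rw [hpair]; exact hHedge) hnb
  refine ⟨hc1, hc2, ?_⟩
  -- Now the cycle statement
  obtain ⟨M, hM⟩ := hbip
  -- e₁ has both ends on the same side of M
  have hx1 : (a ∈ M ↔ b ∈ M) := by
    by_contra hcon
    apply hc2
    refine ⟨M, ?_⟩
    intro u v h
    rw [SimpleGraph.deleteEdges_adj] at h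
    by_cases hx : s(u, v) = s(a, b)
    · rw [Sym2.eq_iff] at hx
      rcases hx with ⟨rfl, rfl⟩ | ⟨rfl, rfl⟩ <;> tauto
    · refine hM (SimpleGraph.deleteEdges_adj.mpr ⟨h.1, ?_⟩)
      simp only [Set.mem_insert_iff, Set.mem_singleton_iff]
      push_neg
      exact ⟨hx, by simpa using h.2⟩
  have hx2 : (c ∈ M ↔ d ∈ M) := by
    by_contra hcon
    apply hc1
    refine ⟨M, ?_⟩
    intro u v h
    rw [SimpleGraph.deleteEdges_adj] at h
    by_cases hx : s(u, v) = s(c, d)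
    · rw [Sym2.eq_iff] at hx
      rcases hx with ⟨rfl, rfl⟩ | ⟨rfl, rfl⟩ <;> tauto
    · refine hM (SimpleGraph.deleteEdges_adj.mpr ⟨h.1, ?_⟩)
      simp only [Set.mem_insert_iff, Set.mem_singleton_iff]
      push_neg
      exact ⟨by simpa using h.2, hx⟩
  intro v p hcyc heven
  have hcrossE : Even (p.darts.countP fun dr =>
      decide (¬(dr.toProd.1 ∈ M ↔ dr.toProd.2 ∈ M))) :=
    (walk_cross_parity M p).mpr Iff.rfl
  have hsplitlen := List.length_eq_countP_add_countP
    (fun dr : G.Dart => decide (¬(dr.toProd.1 ∈ M ↔ dr.toProd.2 ∈ M))) (l := p.darts)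
  have hlen : p.darts.length = p.length := p.length_darts
  set N := p.darts.countP (fun dr : G.Dart =>
    decide (¬((fun dr : G.Dart => decide (¬(dr.toProd.1 ∈ M ↔ dr.toProd.2 ∈ M))) dr = true)))
    with hN
  have hNeven : Even N := by
    rw [Nat.even_iff] at hcrossE ⊢
    have hle : Even p.length := heven
    rw [Nat.even_iff] at hle
    omega
  have hkey : ∀ dd : G.Dart, dd ∈ p.darts →
      ((dd.toProd.1 ∈ M ↔ dd.toProd.2 ∈ M) ↔ (dd.edge = s(a, b) ∨ dd.edge = s(c, d))) := by
    intro dd _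
    constructor
    · intro hsame
      by_contra hor
      push_neg at hor
      have hH : (G.deleteEdges {s(a, b), s(c, d)}).Adj dd.toProd.1 dd.toProd.2 := by
        refine SimpleGraph.deleteEdges_adj.mpr ⟨dd.adj, ?_⟩
        simp only [Set.mem_insert_iff, Set.mem_singleton_iff]
        push_neg
        exact hor
      have := hM hH
      tauto
    · intro hor
      rcases hor with h | h
      · have h' : s(dd.toProd.1, dd.toProd.2) = s(a, b) := h
        rw [Sym2.eq_iff] at h'
        rcases h' with ⟨h1, h2⟩ | ⟨h1, h2⟩ <;> rw [h1, h2] <;> tauto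
      · have h' : s(dd.toProd.1, dd.toProd.2) = s(c, d) := h
        rw [Sym2.eq_iff] at h'
        rcases h' with ⟨h1, h2⟩ | ⟨h1, h2⟩ <;> rw [h1, h2] <;> tauto
  have hNeq : N = p.darts.countP (fun dr => decide (dr.edge = s(a, b)))
      + p.darts.countP (fun dr => decide (dr.edge = s(c, d))) := by
    rw [hN]
    rw [countP_congr' _
      (fun dr : G.Dart => decide (dr.edge = s(a, b)) || decide (dr.edge = s(c, d)))
      p.darts ?_]
    · refine countP_or_disj _ _ p.darts ?_
      intro dd _ hboth
      rw [decide_eq_true_eq, decide_eq_true_eq] at hboth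
      exact hne (hboth.1 ▸ hboth.2 ▸ rfl : s(a, b) = s(c, d))
    · intro dd hdd
      have h1 : (¬((fun dr : G.Dart => decide (¬(dr.toProd.1 ∈ M ↔ dr.toProd.2 ∈ M))) dd = true))
          ↔ (dd.edge = s(a, b) ∨ dd.edge = s(c, d)) := by
        simp only [decide_eq_true_eq, not_not]
        exact hkey dd hdd
      rw [decide_eq_decide.mpr h1, Bool.decide_or]
  have hnodup : (p.darts.map SimpleGraph.Dart.edge).Nodup := hcyc.edges_nodup
  have hk1le : p.darts.countP (fun dr => decide (dr.edge = s(a, b))) ≤ 1 :=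
    countP_map_le_one (s(a, b)) SimpleGraph.Dart.edge _ p.darts hnodup
      (fun dd h => decide_eq_true_eq.mp h)
  have hk2le : p.darts.countP (fun dr => decide (dr.edge = s(c, d))) ≤ 1 :=
    countP_map_le_one (s(c, d)) SimpleGraph.Dart.edge _ p.darts hnodup
      (fun dd h => decide_eq_true_eq.mp h)
  have hm1 : s(a, b) ∈ p.edges ↔ 0 < p.darts.countP (fun dr => decide (dr.edge = s(a, b))) := by
    rw [List.countP_pos_iff]
    constructor
    · intro h
      rcases List.mem_map.mp h with ⟨dd, hdd, hde⟩
      exact ⟨dd, hdd, decide_eq_true_eq.mpr hde⟩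
    · rintro ⟨dd, hdd, hde⟩
      exact List.mem_map.mpr ⟨dd, hdd, decide_eq_true_eq.mp hde⟩
  have hm2 : s(c, d) ∈ p.edges ↔ 0 < p.darts.countP (fun dr => decide (dr.edge = s(c, d))) := by
    rw [List.countP_pos_iff]
    constructor
    · intro h
      rcases List.mem_map.mp h with ⟨dd, hdd, hde⟩
      exact ⟨dd, hdd, decide_eq_true_eq.mpr hde⟩
    · rintro ⟨dd, hdd, hde⟩
      exact List.mem_map.mpr ⟨dd, hdd, decide_eq_true_eq.mp hde⟩
  rw [hm1, hm2]
  rw [hNeq, Nat.even_iff] at hNeven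
  omega
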